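/- Define B_{k,ℓ} := (-1)^k * ∑_{i=0}^{k} C(k,i) * B_{i+ℓ}, where B_j are the Bernoulli numbers. Then B_{k,ℓ} = B_{ℓ,k} for all k,ℓ ≥ 0. -/

import Mathlib

open Finset

private def fB (k l : ℕ) : ℚ := ∑ i ∈ Finset.range (k + 1), (k.choose i : ℚ) * bernoulli (i + l)

private lemma fB_rec (k l : ℕ) : fB (k + 1) l = fB k (l + 1) + fB k l := by
  have h1 : fB (k + 1) l
      = (1 : ℚ) * bernoulli l + ∑ i ∈ range (k + 1),
        ((k.choose i : ℚ) + (k.choose (i + 1) : ℚ)) * bernoulli (i + 1 + l) := by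
    rw [fB, Finset.sum_range_succ']
    simp [Nat.choose_succ_succ, Nat.cast_add]
    ring
  have haux : ∑ i ∈ range (k + 2), (k.choose i : ℚ) * bernoulli (i + l) = fB k l := by
    rw [fB, Finset.sum_range_succ]
    simp
  have h2 : fB k l = (1 : ℚ) * bernoulli l
      + ∑ i ∈ range (k + 1), (k.choose (i + 1) : ℚ) * bernoulli (i + 1 + l) := by
    rw [← haux, Finset.sum_range_succ']
    simp [add_comm]
  have h3 : fB k (l + 1) = ∑ i ∈ range (k + 1), (k.choose i : ℚ) * bernoulli (i + 1 + l) := by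
    rw [fB]
    apply Finset.sum_congr rfl
    intro i _
    rw [show i + (l + 1) = i + 1 + l by ring]
  rw [h1, h2, h3]
  simp_rw [add_mul, Finset.sum_add_distrib]
  ring

private lemma fB_zero (k : ℕ) : fB k 0 = (-1 : ℚ) ^ k * bernoulli k := by
  have : fB k 0 = (∑ i ∈ range k, (k.choose i : ℚ) * bernoulli i) + bernoulli k := by
    rw [fB, Finset.sum_range_succ]
    simp
  rw [this, sum_bernoulli]
  rcases eq_or_ne k 1 with rfl | hk
  · norm_num [bernoulli_one]
  · rw [if_neg hk]
    rcases Nat.even_or_odd k with he | ho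
    · rw [he.neg_one_pow]; ring
    · rw [bernoulli_eq_bernoulli'_of_ne_one hk,
        bernoulli'_eq_zero_of_odd ho (Nat.one_lt_iff_ne_zero_and_ne_one.mpr ⟨ho.pos.ne', hk⟩)]
      ring

private lemma fB_symm (k l : ℕ) :
    (-1 : ℚ) ^ k * fB k l = (-1 : ℚ) ^ l * fB l k := by
  induction k generalizing l with
  | zero =>
    have h0 : fB 0 l = bernoulli l := by simp [fB]
    rw [h0, fB_zero, ← mul_assoc, ← mul_pow]
    norm_num
  | succ k ih =>
    have h1 := fB_rec k l
    have h2 := fB_rec l k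
    have i1 := ih (l + 1)
    have i2 := ih l
    rw [h1]
    linear_combination (-1 : ℚ) * i1 - i2 + (-1 : ℚ) ^ l * h2

theorem stmt_2 (k l : ℕ) :
    (-1 : ℚ) ^ k * ∑ i ∈ Finset.range (k + 1), (k.choose i : ℚ) * bernoulli (i + l)
      = (-1 : ℚ) ^ l * ∑ i ∈ Finset.range (l + 1), (l.choose i : ℚ) * bernoulli (i + k) := by
  exact fB_symm k l
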